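/- Let G'' = (V, E'') be an undirected multigraph, let N be a further multiset of edges on V, and let G = G'' ∪ N (edge multiset union). Let k ≥ 0 be an integer, let F_1, …, F_m be a maximal spanning forest decomposition (msfd) of order m ≥ k+1 of G'', and let H = (V, N ∪ F_1 ∪ … ∪ F_{k+1}). If λ(H) ≤ k, then λ(G) = λ(H); moreover for any minimum cut (A, V∖A) of H one has λ(A,G) = λ(A,H). -/

import Mathlib

open scoped Classical in
/-- A multigraph on vertex set `V` is modeled by the multiset of its edges,
each an unordered pair of distinct vertices. `mCut M S` is the size of the edge cut
`E_M(S, V∖S)`: the number of edges of `M` (with multiplicity) with one endpoint in `S`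
and the other in `Sᶜ`. -/
noncomputable def mCut {V : Type*} (M : Multiset (Sym2 V)) (S : Set V) : ℕ :=
  Multiset.card (M.filter fun e => ∃ u ∈ S, ∃ v ∈ Sᶜ, e = s(u, v))

/-- The simple graph underlying a multiset of edges. -/
def graphOf {V : Type*} (M : Multiset (Sym2 V)) : SimpleGraph V :=
  SimpleGraph.fromEdgeSet {e | e ∈ M}

/-- A multiset of edges is a forest: no repeated edges, no self-loops, and the
underlying simple graph is acyclic. -/
def IsMForest {V : Type*} (F : Multiset (Sym2 V)) : Prop :=
  F.Nodup ∧ (∀ e ∈ F, ¬e.IsDiag) ∧ (graphOf F).IsAcyclic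

/-- `F` is a maximal spanning forest of the multigraph `R`: a subforest of `R` such that
the endpoints of every edge of `R` lie in the same component of `F`. -/
def IsMaxSpanningForest {V : Type*} (R F : Multiset (Sym2 V)) : Prop :=
  F ≤ R ∧ IsMForest F ∧ ∀ u v : V, s(u, v) ∈ R → (graphOf F).Reachable u v

open scoped Classical in
/-- `F 1, …, F m` is a maximal spanning forest decomposition of order `m` of the
multigraph `M`: the forests decompose `M` (so they are edge-disjoint as sub-multisets
and their union is `M`) and each `F i` is a maximal spanning forest of
`M ∖ (F 1 ∪ … ∪ F (i-1))`. -/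
noncomputable def IsMSFD {V : Type*} (M : Multiset (Sym2 V)) (m : ℕ)
    (F : ℕ → Multiset (Sym2 V)) : Prop :=
  (∑ i ∈ Finset.Icc 1 m, F i) = M ∧
  ∀ i ∈ Finset.Icc 1 m, IsMaxSpanningForest (M - ∑ j ∈ Finset.Icc 1 (i - 1), F j) (F i)

/-- The edge connectivity of the multigraph `M`: the minimum of `λ(S,M)` over all
nonempty proper subsets `S ⊂ V`. -/
noncomputable def mEdgeConn {V : Type*} (M : Multiset (Sym2 V)) : ℕ :=
  sInf {c : ℕ | ∃ S : Set V, S.Nonempty ∧ Sᶜ.Nonempty ∧ mCut M S = c}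

open scoped Classical

lemma mCut_add {V : Type*} (M M' : Multiset (Sym2 V)) (S : Set V) :
    mCut (M + M') S = mCut M S + mCut M' S := by
  simp [mCut, Multiset.filter_add]

lemma mCut_mono {V : Type*} {M M' : Multiset (Sym2 V)} (h : M ≤ M') (S : Set V) :
    mCut M S ≤ mCut M' S := by
  exact Multiset.card_le_card (Multiset.filter_le_filter _ h)

lemma mCut_sum {V : Type*} {ι : Type*} (s : Finset ι) (f : ι → Multiset (Sym2 V)) (S : Set V) :
    mCut (∑ i ∈ s, f i) S = ∑ i ∈ s, mCut (f i) S := by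
  induction s using Finset.cons_induction with
  | empty => simp [mCut]
  | cons a s ha ih => rw [Finset.sum_cons, Finset.sum_cons, mCut_add, ih]

lemma adj_mem_iff {V : Type*} (F : Multiset (Sym2 V)) (S : Set V) (h0 : mCut F S = 0)
    {a b : V} (hab : (graphOf F).Adj a b) : a ∈ S ↔ b ∈ S := by
  rw [mCut, Multiset.card_eq_zero, Multiset.filter_eq_nil] at h0
  have hmem : s(a, b) ∈ F := ((SimpleGraph.fromEdgeSet_adj _).mp hab).1
  constructor
  · intro ha; by_contra hb
    exact h0 _ hmem ⟨a, ha, b, hb, rfl⟩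
  · intro hb; by_contra ha
    exact h0 _ hmem ⟨b, hb, a, ha, Sym2.eq_swap⟩

lemma mem_iff_of_reachable {V : Type*} (F : Multiset (Sym2 V)) (S : Set V)
    (h0 : mCut F S = 0) {u v : V}
    (h : (graphOf F).Reachable u v) : u ∈ S ↔ v ∈ S := by
  obtain ⟨w⟩ := h
  induction w with
  | nil => rfl
  | cons hadj _ ih => exact (adj_mem_iff F S h0 hadj).trans ih

lemma key_cut {V : Type*} (G'' : Multiset (Sym2 V)) (k m : ℕ) (hm : k+1 ≤ m)
    (F : ℕ → Multiset (Sym2 V)) (hF : IsMSFD G'' m F) (S : Set V)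
    (hS : mCut (∑ i ∈ Finset.Icc 1 (k+1), F i) S ≤ k) :
    mCut G'' S = mCut (∑ i ∈ Finset.Icc 1 (k+1), F i) S := by
  have hex : ∃ i ∈ Finset.Icc 1 (k+1), mCut (F i) S = 0 := by
    by_contra h
    push_neg at h
    have h1 : ∀ i ∈ Finset.Icc 1 (k+1), 1 ≤ mCut (F i) S :=
      fun i hi => Nat.one_le_iff_ne_zero.mpr (h i hi)
    have h2 := Finset.sum_le_sum h1
    rw [← mCut_sum] at h2
    simp [Nat.card_Icc] at h2
    omega
  obtain ⟨i, hik, h0⟩ := hex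
  simp only [Finset.mem_Icc] at hik
  have him : i ∈ Finset.Icc 1 m := Finset.mem_Icc.mpr ⟨hik.1, le_trans hik.2 hm⟩
  obtain ⟨hFle, -, hreach⟩ := hF.2 i him
  set R := G'' - ∑ j ∈ Finset.Icc 1 (i-1), F j with hR
  have hR0 : mCut R S = 0 := by
    rw [mCut, Multiset.card_eq_zero, Multiset.filter_eq_nil]
    rintro e he ⟨u, hu, v, hv, rfl⟩
    exact hv ((mem_iff_of_reachable (F i) S h0 (hreach u v he)).mp hu)
  have hIcc : ∀ n : ℕ, Finset.Icc 1 n = Finset.Ioc 0 n := fun n => by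
    rw [← Finset.Icc_add_one_left_eq_Ioc]; rfl
  have hsplit : (∑ j ∈ Finset.Ioc 0 (i-1), F j) + (∑ j ∈ Finset.Ioc (i-1) m, F j)
      = ∑ j ∈ Finset.Ioc 0 m, F j := Finset.sum_Ioc_consecutive _ (Nat.zero_le _) (by omega)
  have hG : G'' = ∑ j ∈ Finset.Ioc 0 m, F j := by rw [← hF.1, hIcc]
  have hRR : R = ∑ j ∈ Finset.Ioc (i-1) m, F j := by
    rw [hR, hIcc, hG, ← hsplit, add_tsub_cancel_left]
  have hGdecomp : G'' = (∑ j ∈ Finset.Ioc 0 (i-1), F j) + R := by rw [hRR, hsplit, ← hG]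
  have hsplit2 : (∑ j ∈ Finset.Ioc 0 (i-1), F j) + (∑ j ∈ Finset.Ioc (i-1) (k+1), F j)
      = ∑ j ∈ Finset.Ioc 0 (k+1), F j := Finset.sum_Ioc_consecutive _ (Nat.zero_le _) (by omega)
  have htail : mCut (∑ j ∈ Finset.Ioc (i-1) (k+1), F j) S = 0 := by
    rw [mCut_sum]
    refine Finset.sum_eq_zero fun j hj => ?_
    simp only [Finset.mem_Ioc] at hj
    have hle : F j ≤ R := by
      rw [hRR]
      exact Finset.single_le_sum (f := F) (fun _ _ => Multiset.zero_le _)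
        (Finset.mem_Ioc.mpr ⟨hj.1, le_trans hj.2 hm⟩)
    exact Nat.le_zero.mp (hR0 ▸ mCut_mono hle S)
  calc mCut G'' S = mCut (∑ j ∈ Finset.Ioc 0 (i-1), F j) S + mCut R S := by
        rw [← mCut_add, ← hGdecomp]
    _ = mCut (∑ j ∈ Finset.Ioc 0 (i-1), F j) S + mCut (∑ j ∈ Finset.Ioc (i-1) (k+1), F j) S := by
        rw [hR0, htail]
    _ = mCut (∑ i ∈ Finset.Icc 1 (k+1), F i) S := by rw [← mCut_add, hsplit2, hIcc]

lemma mEdgeConn_of_empty {V : Type*} (M : Multiset (Sym2 V))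
    (hne : ¬ ∃ S : Set V, S.Nonempty ∧ Sᶜ.Nonempty) : mEdgeConn M = 0 := by
  have e1 : {c : ℕ | ∃ S : Set V, S.Nonempty ∧ Sᶜ.Nonempty ∧ mCut M S = c} = ∅ := by
    ext c
    simp only [Set.mem_setOf_eq, Set.mem_empty_iff_false, iff_false]
    rintro ⟨S, h1, h2, -⟩; exact hne ⟨S, h1, h2⟩
  rw [mEdgeConn, e1, Nat.sInf_empty]

lemma mEdgeConn_mono {V : Type*} {M M' : Multiset (Sym2 V)} (h : M ≤ M') :
    mEdgeConn M ≤ mEdgeConn M' := by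
  by_cases hne : ∃ S : Set V, S.Nonempty ∧ Sᶜ.Nonempty
  · obtain ⟨S0, h1, h2⟩ := hne
    refine le_csInf ⟨_, S0, h1, h2, rfl⟩ ?_
    rintro c ⟨S, hS1, hS2, rfl⟩
    exact le_trans (Nat.sInf_le ⟨S, hS1, hS2, rfl⟩) (mCut_mono h S)
  · rw [mEdgeConn_of_empty M hne]
    exact Nat.zero_le _


open scoped Classical in
/-- Let `G'' ` be a multigraph, `N` a further multiset of edges, `G = G'' ∪ N`, `k ≥ 0`,
let `F 1, …, F m` be an msfd of order `m ≥ k + 1` of `G''`, and let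
`H = N ∪ F 1 ∪ … ∪ F (k+1)`. If `λ(H) ≤ k`, then `λ(G) = λ(H)`; moreover for any
minimum cut `(A, V∖A)` of `H` one has `λ(A,G) = λ(A,H)`. -/
theorem msfd_edgeConn_eq {V : Type*} [Fintype V] (G'' N : Multiset (Sym2 V))
    (hG'' : ∀ e ∈ G'', ¬e.IsDiag) (hN : ∀ e ∈ N, ¬e.IsDiag)
    (k m : ℕ) (hm : k + 1 ≤ m) (F : ℕ → Multiset (Sym2 V))
    (hF : IsMSFD G'' m F)
    (hsmall : mEdgeConn (N + ∑ i ∈ Finset.Icc 1 (k + 1), F i) ≤ k) :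
    mEdgeConn (G'' + N) = mEdgeConn (N + ∑ i ∈ Finset.Icc 1 (k + 1), F i) ∧
    ∀ A : Set V, A.Nonempty → Aᶜ.Nonempty →
      mCut (N + ∑ i ∈ Finset.Icc 1 (k + 1), F i) A =
        mEdgeConn (N + ∑ i ∈ Finset.Icc 1 (k + 1), F i) →
      mCut (G'' + N) A = mCut (N + ∑ i ∈ Finset.Icc 1 (k + 1), F i) A := by
  set T := ∑ i ∈ Finset.Icc 1 (k + 1), F i with hT
  have hTle : T ≤ G'' := by
    rw [hT, ← hF.1]
    exact Finset.sum_le_sum_of_subset (Finset.Icc_subset_Icc_right hm)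
  have hHle : N + T ≤ G'' + N := by
    rw [add_comm G'' N]; exact add_le_add_right hTle N
  have hkey : ∀ S : Set V, mCut (N + T) S ≤ k → mCut (G'' + N) S = mCut (N + T) S := by
    intro S hle
    have hNT : mCut (N + T) S = mCut N S + mCut T S := mCut_add N T S
    have hTS : mCut T S ≤ k := by omega
    rw [mCut_add, mCut_add, key_cut G'' k m hm F hF S hTS, Nat.add_comm]
  constructor
  · by_cases hne : ∃ S : Set V, S.Nonempty ∧ Sᶜ.Nonempty
    · obtain ⟨S0, h1, h2⟩ := hne
      have hnemp : {c : ℕ | ∃ S : Set V, S.Nonempty ∧ Sᶜ.Nonempty ∧ mCut (N + T) S = c}.Nonempty :=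
        ⟨_, S0, h1, h2, rfl⟩
      have hmem : ∃ A : Set V, A.Nonempty ∧ Aᶜ.Nonempty ∧ mCut (N + T) A = mEdgeConn (N + T) :=
        Nat.sInf_mem hnemp
      obtain ⟨A, hA1, hA2, hA3⟩ := hmem
      refine le_antisymm ?_ (mEdgeConn_mono hHle)
      calc mEdgeConn (G'' + N) ≤ mCut (G'' + N) A := Nat.sInf_le ⟨A, hA1, hA2, rfl⟩
        _ = mCut (N + T) A := hkey A (by rw [hA3]; exact hsmall)
        _ = mEdgeConn (N + T) := hA3
    · rw [mEdgeConn_of_empty _ hne, mEdgeConn_of_empty _ hne]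
  · intro A hA1 hA2 hAc
    exact hkey A (by rw [hAc]; exact hsmall)
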